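/- arXiv:1806.00275 — 6 statements merged into one kernel-verified Lean document; each statement's English description precedes it below -/
import Mathlib

section
/- For any probability measure ξ on the closed unit ball B_k of ℝ^k and f(x) = (1, x_1, …, x_k)ᵀ, det M(ξ) ≤ det diag(1, 1/k, …, 1/k) = k^{-k}, where M(ξ) = ∫ f f ᵀ dξ. Equality holds for the uniform measure on the sphere S^{k-1}. -/
open MeasureTheory Matrix Set Filter Topology

namespace Stmt4Aux

lemma amgm {k : ℕ} (hk : 1 ≤ k) (z : Fin k → ℝ) (hz : ∀ i, 0 ≤ z i)
    (hsum : ∑ i, z i ≤ 1) : ∏ i, z i ≤ (1 / k : ℝ) ^ k := by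
  have hk0 : (k : ℝ) ≠ 0 := by positivity
  have h1 : ∏ i, (z i) ^ ((1:ℝ)/k) ≤ ∑ i, (1/k : ℝ) * z i := by
    refine Real.geom_mean_le_arith_mean_weighted Finset.univ (fun _ => 1/k) z
      (fun i _ => by positivity) ?_ (fun i _ => hz i)
    simp [Finset.sum_const, Finset.card_univ, hk0]
  have h2 : ∑ i, (1/k : ℝ) * z i ≤ 1/k := by
    rw [← Finset.mul_sum]
    have h0 : (0:ℝ) ≤ 1/k := by positivity
    calc (1/k:ℝ) * ∑ i, z i ≤ (1/k) * 1 := mul_le_mul_of_nonneg_left hsum h0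
      _ = 1/k := mul_one _
  have h3 : ∏ i, z i = (∏ i, (z i) ^ ((1:ℝ)/k)) ^ k := by
    rw [← Finset.prod_pow]
    refine Finset.prod_congr rfl fun i _ => ?_
    rw [← Real.rpow_natCast ((z i) ^ ((1:ℝ)/k)) k, ← Real.rpow_mul (hz i)]
    rw [one_div, inv_mul_cancel₀ hk0, Real.rpow_one]
  rw [h3]
  exact pow_le_pow_left₀ (Finset.prod_nonneg fun i _ => Real.rpow_nonneg (hz i) _)
    (le_trans h1 h2) k

lemma trace_eq_sum_eigenvalues {k : ℕ} {A : Matrix (Fin k) (Fin k) ℝ}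
    (hA : A.IsHermitian) : A.trace = ∑ i, hA.eigenvalues i := by
  simpa using hA.trace_eq_sum_eigenvalues

lemma det_le_of_trace {k : ℕ} (hk : 1 ≤ k) {A : Matrix (Fin k) (Fin k) ℝ}
    (hA : A.PosSemidef) (ht : A.trace ≤ 1) : A.det ≤ (1/k:ℝ)^k := by
  rw [hA.1.det_eq_prod_eigenvalues]
  have := trace_eq_sum_eigenvalues hA.1
  exact_mod_cast amgm hk hA.1.eigenvalues (fun i => hA.eigenvalues_nonneg i)
    (by rw [← this]; exact ht)

variable {k : ℕ}

noncomputable def Mmat (μ : Measure (Fin k → ℝ)) : Matrix (Fin (k+1)) (Fin (k+1)) ℝ :=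
  Matrix.of fun i j : Fin (k+1) =>
    ∫ x, (Fin.cons 1 x : Fin (k+1) → ℝ) i * (Fin.cons 1 x : Fin (k+1) → ℝ) j ∂μ

variable {μ : Measure (Fin k → ℝ)} [IsProbabilityMeasure μ]

lemma M00 : Mmat μ 0 0 = 1 := by simp [Mmat]

omit [IsProbabilityMeasure μ] in
lemma M0s (j : Fin k) : Mmat μ 0 j.succ = ∫ x, x j ∂μ := by simp [Mmat]

omit [IsProbabilityMeasure μ] in
lemma Ms0 (i : Fin k) : Mmat μ i.succ 0 = ∫ x, x i ∂μ := by simp [Mmat]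

omit [IsProbabilityMeasure μ] in
lemma Mss (i j : Fin k) : Mmat μ i.succ j.succ = ∫ x, x i * x j ∂μ := by simp [Mmat]

/-- Schur complement reduction of the determinant. -/
lemma det_M_eq :
    (Mmat μ).det = (Matrix.of fun i j : Fin k =>
      (∫ x, x i * x j ∂μ) - (∫ x, x i ∂μ) * (∫ x, x j ∂μ)).det := by
  set m : Fin k → ℝ := fun i => ∫ x, x i ∂μ with hm
  set E : Matrix (Fin (k+1)) (Fin (k+1)) ℝ :=
    Matrix.of fun i j => if j = i then (1:ℝ) else
      if j = 0 then -((Fin.cons 0 m : Fin (k+1) → ℝ) i) else 0 with hE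
  have hEdet : E.det = 1 := by
    rw [Matrix.det_of_lowerTriangular E]
    · simp [hE]
    · intro i j hij
      have hij' : i < j := hij
      have h1 : j ≠ i := (ne_of_lt hij').symm
      have h2 : j ≠ 0 := Fin.pos_iff_ne_zero.mp (lt_of_le_of_lt (Fin.zero_le i) hij')
      simp [hE, h1, h2]
  have hEM : E * Mmat μ = Matrix.of fun i j =>
      Mmat μ i j - (Fin.cons 0 m : Fin (k+1) → ℝ) i * Mmat μ 0 j := by
    ext i j
    rw [Matrix.mul_apply]
    have hterm : ∀ l, E i l * Mmat μ l j =
        (if l = i then Mmat μ i j else 0) +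
        (if l = 0 then -((Fin.cons 0 m : Fin (k+1) → ℝ) i) * Mmat μ 0 j else 0) := by
      intro l
      by_cases h1 : l = i <;> by_cases h2 : l = 0
      · subst h1; subst h2; simp [hE]
      · subst h1; simp [hE, h2]
      · subst h2
        simp [hE, Ne.symm h1, h1]
      · simp [hE, h1, h2, Ne.symm h1]
    simp only [hterm, Finset.sum_add_distrib, Finset.sum_ite_eq', Finset.mem_univ, if_true]
    simp only [Matrix.of_apply]
    ring
  have hdet : (Mmat μ).det = (E * Mmat μ).det := by
    rw [Matrix.det_mul, hEdet, one_mul]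
  rw [hdet, hEM]
  rw [Matrix.det_succ_column_zero]
  rw [Fin.sum_univ_succ]
  have hzero : ∀ i : Fin k,
      (Matrix.of fun i j => Mmat μ i j - (Fin.cons 0 m : Fin (k+1) → ℝ) i * Mmat μ 0 j)
        i.succ 0 = 0 := by
    intro i
    simp only [Matrix.of_apply, Fin.cons_succ, Ms0, M00, hm]
    ring
  rw [Finset.sum_eq_zero (fun i _ => by rw [hzero i]; ring)]
  simp only [Matrix.of_apply, Fin.cons_zero, M00, Fin.val_zero, pow_zero, one_mul, add_zero,
    zero_mul, sub_zero, Fin.succAbove_zero]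
  congr 1
  ext i j
  simp [Mss, M0s, hm]

lemma coord_abs {x : Fin k → ℝ} (hx : ∑ i, (x i)^2 ≤ 1) (i : Fin k) : |x i| ≤ 1 := by
  rw [← sq_le_one_iff_abs_le_one]
  exact le_trans (Finset.single_le_sum (fun m _ => sq_nonneg (x m)) (Finset.mem_univ i)) hx

lemma integrable_of_bdd {f : (Fin k → ℝ) → ℝ} (hf : Continuous f) (C : ℝ)
    (hb : ∀ᵐ x ∂μ, |f x| ≤ C) : Integrable f μ :=
  (integrable_const C).mono' hf.aestronglyMeasurable (by simpa using hb)

variable (hae : ∀ᵐ x ∂μ, ∑ i, (x i)^2 ≤ 1)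
include hae

lemma integrable_coord (i : Fin k) : Integrable (fun x => x i) μ :=
  integrable_of_bdd (continuous_apply i) 1 (hae.mono fun x hx => coord_abs hx i)

lemma integrable_coord_mul (i j : Fin k) : Integrable (fun x => x i * x j) μ :=
  integrable_of_bdd ((continuous_apply i).mul (continuous_apply j)) 1
    (hae.mono fun x hx => by
      rw [abs_mul]
      calc |x i| * |x j| ≤ 1 * 1 :=
          mul_le_mul (coord_abs hx i) (coord_abs hx j) (abs_nonneg _) zero_le_one
        _ = 1 := one_mul 1)

lemma A_posSemidef : (Matrix.of fun i j : Fin k =>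
    (∫ x, x i * x j ∂μ) - (∫ x, x i ∂μ) * (∫ x, x j ∂μ)).PosSemidef := by
  set S : Fin k → Fin k → ℝ := fun i j => ∫ x, x i * x j ∂μ with hS
  set m : Fin k → ℝ := fun i => ∫ x, x i ∂μ with hm
  rw [Matrix.posSemidef_iff_dotProduct_mulVec]
  constructor
  · ext i j
    have hcomm : (∫ x, x j * x i ∂μ) = ∫ x, x i * x j ∂μ := by
      congr 1; ext x; ring
    simp only [Matrix.conjTranspose_apply, Matrix.of_apply, star_trivial, hS, hm]
    rw [hcomm]; ring
  · intro v
    set c : ℝ := ∑ i, v i * m i with hc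
    have hg : Integrable (fun x => ∑ i, v i * x i) μ :=
      integrable_finset_sum _ fun i _ => (integrable_coord hae i).const_mul (v i)
    have hgsq : ∀ x : Fin k → ℝ,
        (∑ i, v i * x i)^2 = ∑ i, ∑ j, (v i * v j) * (x i * x j) := by
      intro x
      rw [sq, Finset.sum_mul_sum]
      exact Finset.sum_congr rfl fun i _ => Finset.sum_congr rfl fun j _ => by ring
    have ID : Integrable (fun x => ∑ i, ∑ j, (v i * v j) * (x i * x j)) μ :=
      integrable_finset_sum _ fun i _ => integrable_finset_sum _ fun j _ =>
        (integrable_coord_mul hae i j).const_mul _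
    have hID : (∫ x, ∑ i, ∑ j, (v i * v j) * (x i * x j) ∂μ)
        = ∑ i, ∑ j, (v i * v j) * S i j := by
      rw [integral_finset_sum _ fun i _ => integrable_finset_sum _ fun j _ =>
        (integrable_coord_mul hae i j).const_mul _]
      refine Finset.sum_congr rfl fun i _ => ?_
      rw [integral_finset_sum _ fun j _ => (integrable_coord_mul hae i j).const_mul _]
      exact Finset.sum_congr rfl fun j _ => integral_const_mul _ _
    have hI1 : (∫ x, ∑ i, v i * x i ∂μ) = c := by
      rw [integral_finset_sum _ fun i _ => (integrable_coord hae i).const_mul (v i)]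
      exact Finset.sum_congr rfl fun i _ => integral_const_mul _ _
    have hvar : (0:ℝ) ≤ (∑ i, ∑ j, (v i * v j) * S i j) - c^2 := by
      have key : (0:ℝ) ≤ ∫ x, ((∑ i, v i * x i) - c)^2 ∂μ :=
        integral_nonneg fun x => sq_nonneg _
      have hexp : ∀ x : Fin k → ℝ, ((∑ i, v i * x i) - c)^2
          = ((∑ i, ∑ j, (v i * v j) * (x i * x j)) - 2*c*(∑ i, v i * x i)) + c^2 := by
        intro x; rw [← hgsq x]; ring
      have hfeq : (fun x : Fin k → ℝ => ((∑ i, v i * x i) - c)^2)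
          = fun x : Fin k → ℝ =>
            ((∑ i, ∑ j, (v i * v j) * (x i * x j)) - 2*c*(∑ i, v i * x i)) + c^2 :=
        funext hexp
      rw [hfeq] at key
      have hsub : Integrable (fun x => (∑ i, ∑ j, (v i * v j) * (x i * x j))
          - 2*c*(∑ i, v i * x i)) μ := ID.sub (hg.const_mul (2*c))
      rw [integral_add hsub (integrable_const _),
        integral_sub ID (hg.const_mul (2*c)), integral_const_mul, hI1, hID,
        integral_const] at key
      simp only [probReal_univ, smul_eq_mul, one_mul] at key
      nlinarith [key]
    have hdot : v ⬝ᵥ ((Matrix.of fun i j : Fin k => S i j - m i * m j) *ᵥ v)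
        = (∑ i, ∑ j, (v i * v j) * S i j) - c^2 := by
      simp only [dotProduct, Matrix.mulVec, Matrix.of_apply]
      calc ∑ i, v i * ∑ j, (S i j - m i * m j) * v j
          = ∑ i, ∑ j, ((v i * v j) * S i j - (v i * m i) * (v j * m j)) := by
            refine Finset.sum_congr rfl fun i _ => ?_
            rw [Finset.mul_sum]
            exact Finset.sum_congr rfl fun j _ => by ring
        _ = (∑ i, ∑ j, (v i * v j) * S i j) - ∑ i, ∑ j, (v i * m i) * (v j * m j) := by
            simp [Finset.sum_sub_distrib]
        _ = (∑ i, ∑ j, (v i * v j) * S i j) - c^2 := by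
            rw [← Finset.sum_mul_sum, hc, sq]
    rw [star_trivial]; exact le_of_le_of_eq hvar hdot.symm

lemma A_trace_le : (Matrix.of fun i j : Fin k =>
    (∫ x, x i * x j ∂μ) - (∫ x, x i ∂μ) * (∫ x, x j ∂μ)).trace ≤ 1 := by
  have h1 : ∑ i : Fin k, (∫ x, x i * x i ∂μ) = ∫ x, ∑ i, (x i)^2 ∂μ := by
    rw [integral_finset_sum _ fun i _ => ?_]
    · refine Finset.sum_congr rfl fun i _ => ?_
      congr 1; ext x; ring
    · have := integrable_coord_mul hae i i
      simpa [sq] using this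
  have h2 : (∫ x, ∑ i, (x i)^2 ∂μ) ≤ 1 := by
    calc (∫ x, ∑ i, (x i)^2 ∂μ) ≤ ∫ _x, (1:ℝ) ∂μ := by
          refine integral_mono_ae
            (integrable_finset_sum _ fun i _ => by
              simpa [sq] using integrable_coord_mul hae i i)
            (integrable_const 1) hae
      _ = 1 := by simp
  have h3 : (0:ℝ) ≤ ∑ i : Fin k, (∫ x, x i ∂μ) * (∫ x, x i ∂μ) :=
    Finset.sum_nonneg fun i _ => mul_self_nonneg _
  have h4 : (Matrix.of fun i j : Fin k =>
      (∫ x, x i * x j ∂μ) - (∫ x, x i ∂μ) * (∫ x, x j ∂μ)).trace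
      = (∑ i : Fin k, ∫ x, x i * x i ∂μ) - ∑ i : Fin k, (∫ x, x i ∂μ) * (∫ x, x i ∂μ) := by
    simp [Matrix.trace, Matrix.diag, Finset.sum_sub_distrib]
  rw [h4, h1]
  linarith


omit hae

section Part2

lemma measurable_mulVec (O : Matrix (Fin k) (Fin k) ℝ) :
    Measurable (fun x : Fin k → ℝ => O.mulVec x) :=
  measurable_pi_lambda _ fun a => by
    have h : (fun x : Fin k → ℝ => (O *ᵥ x) a) = fun x => ∑ l, O a l * x l := rfl
    rw [h]
    exact Finset.measurable_sum _ fun l _ => by fun_prop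

variable {ν : Measure (Fin k → ℝ)} [IsProbabilityMeasure ν]
variable (hinv : ∀ O : Matrix (Fin k) (Fin k) ℝ, O * Oᵀ = 1 →
    ν.map (fun x => O.mulVec x) = ν)
include hinv

lemma map_integral (O : Matrix (Fin k) (Fin k) ℝ) (hO : O * Oᵀ = 1)
    (f : (Fin k → ℝ) → ℝ) (hf : Continuous f) :
    (∫ x, f x ∂ν) = ∫ x, f (O.mulVec x) ∂ν := by
  conv_lhs => rw [← hinv O hO]
  exact integral_map (measurable_mulVec O).aemeasurable hf.aestronglyMeasurable

lemma m_zero (i : Fin k) : (∫ x, x i ∂ν) = 0 := by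
  have h := map_integral hinv (-1) (by simp) (fun x => x i) (continuous_apply i)
  have h2 : (fun x : Fin k → ℝ => ((-1 : Matrix (Fin k) (Fin k) ℝ).mulVec x) i)
      = fun x => -(x i) := by
    funext x
    rw [Matrix.neg_mulVec, Matrix.one_mulVec]
    rfl
  rw [h2, integral_neg] at h
  linarith

lemma S_offdiag (i j : Fin k) (hij : i ≠ j) : (∫ x, x i * x j ∂ν) = 0 := by
  set d : Fin k → ℝ := fun l => if l = i then -1 else 1 with hd
  have hO : Matrix.diagonal d * (Matrix.diagonal d)ᵀ = 1 := by
    rw [Matrix.diagonal_transpose, Matrix.diagonal_mul_diagonal]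
    have : (fun l => d l * d l) = fun _ => (1:ℝ) := by
      funext l; by_cases h : l = i <;> simp [hd, h]
    rw [this, Matrix.diagonal_one]
  have h := map_integral hinv (Matrix.diagonal d) hO (fun x => x i * x j)
    ((continuous_apply i).mul (continuous_apply j))
  have h2 : (fun x : Fin k → ℝ =>
      ((Matrix.diagonal d).mulVec x) i * ((Matrix.diagonal d).mulVec x) j)
      = fun x => -(x i * x j) := by
    funext x
    rw [Matrix.mulVec_diagonal, Matrix.mulVec_diagonal]
    simp [hd, hij.symm]
  rw [h2, integral_neg] at h
  linarith

lemma S_diag_eq (i j : Fin k) : (∫ x, x i * x i ∂ν) = ∫ x, x j * x j ∂ν := by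
  set σ := Equiv.swap i j with hσ
  set O : Matrix (Fin k) (Fin k) ℝ := Matrix.of fun a b => if b = σ a then 1 else 0 with hO
  have hOO : O * Oᵀ = 1 := by
    ext a b
    simp only [Matrix.mul_apply, Matrix.transpose_apply, Matrix.one_apply, hO,
      Matrix.of_apply, ite_mul, one_mul, zero_mul, Finset.sum_ite_eq', Finset.mem_univ,
      if_true]
    simp [Equiv.apply_eq_iff_eq]
  have hmv : ∀ x : Fin k → ℝ, ∀ a, (O.mulVec x) a = x (σ a) := by
    intro x a
    simp [hO, Matrix.mulVec, dotProduct, ite_mul, one_mul, zero_mul,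
      Finset.sum_ite_eq']
  have h := map_integral hinv O hOO (fun x => x i * x i)
    ((continuous_apply i).mul (continuous_apply i))
  rw [show (fun x : Fin k → ℝ => (O.mulVec x) i * (O.mulVec x) i)
      = fun x => x (σ i) * x (σ i) from funext fun x => by rw [hmv]] at h
  rw [h, hσ, Equiv.swap_apply_left]


variable (hsph : ∀ᵐ x ∂ν, ∑ i, (x i)^2 = 1)
include hsph

lemma S_diag_val (hk : 1 ≤ k) (i : Fin k) : (∫ x, x i * x i ∂ν) = 1/k := by
  have hae : ∀ᵐ x ∂ν, ∑ i, (x i)^2 ≤ 1 := hsph.mono fun x hx => le_of_eq hx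
  have hk0 : (k : ℝ) ≠ 0 := by positivity
  have hsum : ∑ j : Fin k, (∫ x, x j * x j ∂ν) = 1 := by
    have h1 : ∑ j : Fin k, (∫ x, x j * x j ∂ν) = ∫ x, ∑ j, (x j)^2 ∂ν := by
      rw [integral_finset_sum _ fun j _ => ?_]
      · refine Finset.sum_congr rfl fun j _ => ?_
        congr 1; ext x; ring
      · simpa [sq] using integrable_coord_mul hae j j
    rw [h1, integral_congr_ae (hsph.mono fun x hx => hx)]
    simp
  have h2 : ∑ j : Fin k, (∫ x, x j * x j ∂ν) = k * ∫ x, x i * x i ∂ν := by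
    rw [Finset.sum_congr rfl fun j _ => S_diag_eq hinv j i]
    simp [Finset.sum_const, Finset.card_univ, nsmul_eq_mul]
  rw [h2] at hsum
  rw [eq_div_iff hk0]
  linarith [mul_comm (k:ℝ) (∫ x, x i * x i ∂ν)]

lemma M_eq_diagonal (hk : 1 ≤ k) :
    Mmat ν = Matrix.diagonal (Fin.cons 1 (fun _ => (1/k : ℝ))) := by
  have hae : ∀ᵐ x ∂ν, ∑ i, (x i)^2 ≤ 1 := hsph.mono fun x hx => le_of_eq hx
  ext a b
  induction a using Fin.cases with
  | zero =>
    induction b using Fin.cases with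
    | zero => rw [M00]; simp
    | succ j =>
      rw [M0s, m_zero hinv j]
      rw [Matrix.diagonal_apply_ne _ (Fin.succ_ne_zero j).symm]
  | succ i =>
    induction b using Fin.cases with
    | zero =>
      rw [Ms0, m_zero hinv i]
      rw [Matrix.diagonal_apply_ne _ (Fin.succ_ne_zero i)]
    | succ j =>
      rw [Mss]
      by_cases hij : i = j
      · subst hij
        rw [S_diag_val hinv hsph hk i, Matrix.diagonal_apply_eq]
        simp
      · rw [S_offdiag hinv i j hij,
          Matrix.diagonal_apply_ne _ (by simpa [Fin.succ_inj] using hij)]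

end Part2

end Stmt4Aux

open Stmt4Aux in
/-- D-optimality of the uniform spherical design in the linear model: for any
probability measure on the unit ball, `det M(ξ) ≤ k^{-k}`, with equality for
the uniform (rotation-invariant) measure on the sphere. -/
theorem stmt4 (k : ℕ) (hk : 1 ≤ k)
    (μ : Measure (Fin k → ℝ)) [IsProbabilityMeasure μ]
    (hsupp : μ {x | ∑ i, (x i) ^ 2 ≤ 1} = 1) :
    (Matrix.of fun i j : Fin (k+1) =>
        ∫ x, (Fin.cons 1 x : Fin (k+1) → ℝ) i * (Fin.cons 1 x : Fin (k+1) → ℝ) j ∂μ).det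
      ≤ (1 / k : ℝ) ^ k ∧
    (∀ ν : Measure (Fin k → ℝ), IsProbabilityMeasure ν →
      ν {x | ∑ i, (x i) ^ 2 = 1} = 1 →
      (∀ O : Matrix (Fin k) (Fin k) ℝ, O * Oᵀ = 1 →
        ν.map (fun x => O.mulVec x) = ν) →
      (Matrix.of fun i j : Fin (k+1) =>
        ∫ x, (Fin.cons 1 x : Fin (k+1) → ℝ) i * (Fin.cons 1 x : Fin (k+1) → ℝ) j ∂ν).det
        = (1 / k : ℝ) ^ k) := by
  have hsummeas : Measurable (fun x : Fin k → ℝ => ∑ i, (x i)^2) :=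
    Finset.measurable_sum _ fun i _ => (measurable_pi_apply i).pow_const 2
  constructor
  · have hae : ∀ᵐ x ∂μ, ∑ i, (x i)^2 ≤ 1 :=
      mem_ae_iff.mpr ((prob_compl_eq_zero_iff
        (measurableSet_le hsummeas measurable_const)).mpr hsupp)
    show (Mmat μ).det ≤ _
    rw [det_M_eq]
    exact det_le_of_trace hk (A_posSemidef hae) (A_trace_le hae)
  · intro ν hν hsphset hinv
    have hsph : ∀ᵐ x ∂ν, ∑ i, (x i)^2 = 1 :=
      mem_ae_iff.mpr ((prob_compl_eq_zero_iff
        (measurableSet_eq_fun hsummeas measurable_const)).mpr hsphset)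
    show (Mmat ν).det = _
    rw [M_eq_diagonal hinv hsph hk, Matrix.det_diagonal, Fin.prod_univ_succ]
    simp
end

section
/- Let k ≥ 2, β₁ > 0, and set x* = (−1 + √(1 − (2/k)β₁ + β₁²))/β₁. Then x* ∈ (−1, 1) and β₁ = 2(1 + k x*)/(k (1 − x*²)); i.e., x* solves the D-optimality equation for Poisson regression. Moreover 1 − (2/k)β₁ + β₁² > 0, so the square root is well defined. -/
open MeasureTheory Set Filter Topology

/-- For Poisson regression (`k ≥ 2`, `β₁ > 0`),
`x* = (-1 + √(1 - (2/k)β₁ + β₁²))/β₁` lies in `(-1,1)` and solves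
`β₁ = 2(1+kx*)/(k(1-x*²))`; moreover the discriminant is positive. -/
theorem stmt10 (k : ℕ) (hk : 2 ≤ k) (β₁ : ℝ) (hβ : 0 < β₁) :
    0 < 1 - (2 / k) * β₁ + β₁ ^ 2 ∧
    (-1 + Real.sqrt (1 - (2 / k) * β₁ + β₁ ^ 2)) / β₁ ∈ Ioo (-1 : ℝ) 1 ∧
    β₁ = 2 * (1 + k * ((-1 + Real.sqrt (1 - (2 / k) * β₁ + β₁ ^ 2)) / β₁)) /
        (k * (1 - ((-1 + Real.sqrt (1 - (2 / k) * β₁ + β₁ ^ 2)) / β₁) ^ 2)) := by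
  have hk2 : (2 : ℝ) ≤ (k : ℝ) := by exact_mod_cast hk
  have hk0 : (0 : ℝ) < (k : ℝ) := by linarith
  have hfrac : 2 / (k : ℝ) ≤ 1 := by
    rw [div_le_one hk0]; linarith
  have hfrac0 : 0 < 2 / (k : ℝ) := by positivity
  have hD : 0 < 1 - (2 / k) * β₁ + β₁ ^ 2 := by
    nlinarith [sq_nonneg (2 * β₁ - 1), mul_le_mul_of_nonneg_right hfrac hβ.le]
  refine ⟨hD, ?_⟩
  set s := Real.sqrt (1 - (2 / k) * β₁ + β₁ ^ 2) with hs
  have hs2 : s ^ 2 = 1 - (2 / k) * β₁ + β₁ ^ 2 := Real.sq_sqrt hD.le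
  have hs0 : 0 < s := Real.sqrt_pos.mpr hD
  have hlt : s < 1 + β₁ := by
    nlinarith [mul_pos hfrac0 hβ]
  have hgt : 1 - β₁ < s := by
    nlinarith [mul_le_mul_of_nonneg_right hfrac hβ.le]
  have hxlo : -1 < (-1 + s) / β₁ := by
    rw [lt_div_iff₀ hβ]; linarith
  have hxhi : (-1 + s) / β₁ < 1 := by
    rw [div_lt_one hβ]; linarith
  refine ⟨⟨hxlo, hxhi⟩, ?_⟩
  have h1x : 0 < 1 - ((-1 + s) / β₁) ^ 2 := by nlinarith
  have hne : (k : ℝ) * (1 - ((-1 + s) / β₁) ^ 2) ≠ 0 := by positivity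
  rw [eq_div_iff hne]
  have hks : (k:ℝ) * s ^ 2 = k - 2 * β₁ + k * β₁ ^ 2 := by
    rw [hs2]; field_simp
  field_simp
  linear_combination (-1) * hks
end

section
/- For k ≥ 2, the map β₁ ↦ x*(β₁) = (−1 + √(1 − (2/k)β₁ + β₁²))/β₁ on (0, ∞), extended by x*(0) = −1/k, is continuous at 0, strictly increasing on [0, ∞), and satisfies lim_{β₁→∞} x*(β₁) = 1. -/
open MeasureTheory Set Filter Topology

/-- For `k ≥ 2`, the map `β₁ ↦ x*(β₁)`, with `x*(0) = -1/k`, is continuous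
at `0` (from the right), strictly increasing on `[0,∞)`, and tends to `1`
as `β₁ → ∞`. -/
theorem stmt11 (k : ℕ) (hk : 2 ≤ k) :
    ContinuousWithinAt
      (fun b : ℝ => if b = 0 then (-1 / k : ℝ)
        else (-1 + Real.sqrt (1 - (2 / k) * b + b ^ 2)) / b) (Ici 0) 0 ∧
    StrictMonoOn
      (fun b : ℝ => if b = 0 then (-1 / k : ℝ)
        else (-1 + Real.sqrt (1 - (2 / k) * b + b ^ 2)) / b) (Ici 0) ∧
    Tendsto
      (fun b : ℝ => if b = 0 then (-1 / k : ℝ)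
        else (-1 + Real.sqrt (1 - (2 / k) * b + b ^ 2)) / b) atTop (𝓝 1) := by
  have hK : (2:ℝ) ≤ (k:ℝ) := by exact_mod_cast hk
  have hK0 : (0:ℝ) < (k:ℝ) := by linarith
  set c : ℝ := 2 / (k:ℝ) with hc_def
  have hc0 : 0 < c := by positivity
  have hc1 : c ≤ 1 := by rw [hc_def, div_le_one hK0]; linarith
  have hq : ∀ b : ℝ, 0 < 1 - c * b + b ^ 2 := by
    intro b
    nlinarith [sq_nonneg (2*b - c), sq_nonneg c]
  have hs_sq : ∀ b : ℝ, (Real.sqrt (1 - c * b + b ^ 2)) ^ 2 = 1 - c * b + b ^ 2 :=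
    fun b => Real.sq_sqrt (hq b).le
  have hs_pos : ∀ b : ℝ, 0 < Real.sqrt (1 - c * b + b ^ 2) :=
    fun b => Real.sqrt_pos.2 (hq b)
  have h1s : ∀ b : ℝ, 0 < 1 + Real.sqrt (1 - c * b + b ^ 2) :=
    fun b => by linarith [hs_pos b]
  have hfg : (fun b : ℝ => if b = 0 then (-1 / k : ℝ)
        else (-1 + Real.sqrt (1 - c * b + b ^ 2)) / b)
      = fun b : ℝ => (b - c) / (1 + Real.sqrt (1 - c * b + b ^ 2)) := by
    funext b
    by_cases hb : b = 0
    · subst hb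
      rw [if_pos rfl]
      have : (1 - c * 0 + 0 ^ 2 : ℝ) = 1 := by ring
      rw [this, Real.sqrt_one, hc_def]
      field_simp
      ring
    · rw [if_neg hb, div_eq_div_iff hb (h1s b).ne']
      linear_combination hs_sq b
  have hcont : Continuous (fun b : ℝ => (b - c) / (1 + Real.sqrt (1 - c * b + b ^ 2))) := by
    apply Continuous.div
    · continuity
    · continuity
    · exact fun b => (h1s b).ne'
  refine ⟨?_, ?_, ?_⟩
  · rw [hfg]
    exact hcont.continuousWithinAt
  · rw [hfg]
    apply strictMonoOn_of_deriv_pos (convex_Ici 0) hcont.continuousOn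
    intro x hx
    rw [interior_Ici] at hx
    have hx0 : (0:ℝ) < x := hx
    set s := Real.sqrt (1 - c * x + x ^ 2) with hs_def
    have hqd : HasDerivAt (fun b : ℝ => 1 - c * b + b ^ 2) (-c + 2 * x) x := by
      have h1 : HasDerivAt (fun b : ℝ => 1 - c * b) (-c) x := by
        simpa using ((hasDerivAt_id x).const_mul c).const_sub 1
      have h2 : HasDerivAt (fun b : ℝ => b ^ 2) (2 * x) x := by
        simpa using hasDerivAt_pow 2 x
      exact h1.add h2
    have hsd : HasDerivAt (fun b : ℝ => Real.sqrt (1 - c * b + b ^ 2))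
        ((-c + 2 * x) / (2 * s)) x := hqd.sqrt (hq x).ne'
    have hd : HasDerivAt (fun b : ℝ => 1 + Real.sqrt (1 - c * b + b ^ 2))
        ((-c + 2 * x) / (2 * s)) x := by
      simpa using (hsd.const_add 1)
    have hu : HasDerivAt (fun b : ℝ => b - c) 1 x := (hasDerivAt_id x).sub_const c
    have hg : HasDerivAt (fun b : ℝ => (b - c) / (1 + Real.sqrt (1 - c * b + b ^ 2)))
        ((1 * (1 + s) - (x - c) * ((-c + 2 * x) / (2 * s))) / (1 + s) ^ 2) x :=
      hu.div hd (h1s x).ne'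
    rw [hg.deriv]
    apply div_pos
    · rw [mul_div_assoc', sub_pos, div_lt_iff₀ (by linarith [hs_pos x])]
      nlinarith [hs_sq x, hs_pos x, mul_pos hc0 hx0, sq_nonneg c, mul_le_of_le_one_right hc0.le hc1]
    · positivity
  · have hinv : Tendsto (fun b : ℝ => b⁻¹) atTop (𝓝 0) := tendsto_inv_atTop_zero
    have hinner : Tendsto (fun b : ℝ => b⁻¹ ^ 2 - c * b⁻¹ + 1) atTop (𝓝 1) := by
      have := (((hinv.pow 2).sub (hinv.const_mul c)).add_const 1)
      simpa using this
    have hsq : Tendsto (fun b : ℝ => Real.sqrt (b⁻¹ ^ 2 - c * b⁻¹ + 1)) atTop (𝓝 1) := by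
      have := (Real.continuous_sqrt.tendsto 1).comp hinner
      rw [Real.sqrt_one] at this
      exact this
    have h3 : Tendsto (fun b : ℝ => -b⁻¹ + Real.sqrt (b⁻¹ ^ 2 - c * b⁻¹ + 1)) atTop (𝓝 1) := by
      have := (hinv.neg).add hsq
      simpa using this
    refine h3.congr' ?_
    filter_upwards [eventually_gt_atTop (0:ℝ)] with b hb
    rw [if_neg hb.ne']
    have hb2 : b⁻¹ ^ 2 - c * b⁻¹ + 1 = (1 - c * b + b ^ 2) / b ^ 2 := by
      field_simp
    rw [hb2, Real.sqrt_div (hq b).le, Real.sqrt_sq hb.le]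
    field_simp
end

section
/- For k = 1 and Poisson regression with slope β₁ ≥ 0: if β₁ ∈ [0, 1] then the function x ↦ exp(β₁ x)(1 − x)² attains its maximum over [−1, 1) at x = −1; if β₁ > 1 the equation β₁ = 2/(1 − x) has the unique solution x = 1 − 2/β₁ ∈ (−1, 1), and exp(β₁ x)(1 − x)² attains its maximum there. -/
open MeasureTheory Set Filter Topology

/-- Key inequality: `exp t · (2 - t)² ≤ 4` for `t ≤ 2`. -/
lemma key_ineq (t : ℝ) (ht : t ≤ 2) : Real.exp t * (2 - t) ^ 2 ≤ 4 := by
  have h1 : Real.exp (t / 2) * (1 - t / 2) ≤ 1 := by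
    have h := Real.add_one_le_exp (-(t / 2))
    have hmul : Real.exp (t / 2) * Real.exp (-(t / 2)) = 1 := by
      rw [← Real.exp_add]; simp
    have hpos := Real.exp_pos (t / 2)
    nlinarith
  have h2 : (0 : ℝ) ≤ 1 - t / 2 := by linarith
  have h3 : Real.exp t = Real.exp (t / 2) * Real.exp (t / 2) := by
    rw [← Real.exp_add]; ring_nf
  have hpos := Real.exp_pos (t / 2)
  nlinarith [mul_nonneg hpos.le h2]

/-- Poisson regression on `[-1,1]` (`k = 1`): for `β₁ ∈ [0,1]` the function
`exp(β₁x)(1-x)²` is maximized on `[-1,1)` at `x = -1`; for `β₁ > 1` the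
equation `β₁ = 2/(1-x)` has the unique solution `x = 1 - 2/β₁ ∈ (-1,1)`,
where the maximum is attained. -/
theorem stmt13 (β₁ : ℝ) :
    (0 ≤ β₁ → β₁ ≤ 1 → ∀ x ∈ Ico (-1 : ℝ) 1,
      Real.exp (β₁ * x) * (1 - x) ^ 2
        ≤ Real.exp (β₁ * (-1)) * (1 - (-1 : ℝ)) ^ 2) ∧
    (1 < β₁ →
      (1 - 2 / β₁ ∈ Ioo (-1 : ℝ) 1 ∧
      (∃! x : ℝ, x ∈ Ioo (-1 : ℝ) 1 ∧ β₁ = 2 / (1 - x)) ∧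
      β₁ = 2 / (1 - (1 - 2 / β₁)) ∧
      ∀ x ∈ Ico (-1 : ℝ) 1,
        Real.exp (β₁ * x) * (1 - x) ^ 2
          ≤ Real.exp (β₁ * (1 - 2 / β₁)) * (1 - (1 - 2 / β₁)) ^ 2)) := by
  constructor
  · -- case 0 ≤ β₁ ≤ 1
    intro hb0 hb1 x hx
    obtain ⟨hx1, hx2⟩ := hx
    set t : ℝ := β₁ * (x + 1) with ht_def
    have ht2 : t ≤ 2 := by nlinarith
    have key := key_ineq t ht2
    have h1x : (0 : ℝ) ≤ 1 - x := by linarith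
    have h2t : 1 - x ≤ 2 - t := by nlinarith
    have hexp : Real.exp (β₁ * x) = Real.exp (β₁ * (-1)) * Real.exp t := by
      rw [← Real.exp_add, ht_def]; ring_nf
    have h4 : Real.exp t * (1 - x) ^ 2 ≤ (1 - (-1 : ℝ)) ^ 2 := by
      have hEt := (Real.exp_pos t).le
      have hsq : (1 - x) ^ 2 ≤ (2 - t) ^ 2 := by nlinarith
      have hm := mul_le_mul_of_nonneg_left hsq hEt
      norm_num
      linarith
    calc Real.exp (β₁ * x) * (1 - x) ^ 2
        = Real.exp (β₁ * (-1)) * (Real.exp t * (1 - x) ^ 2) := by rw [hexp]; ring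
      _ ≤ Real.exp (β₁ * (-1)) * (1 - (-1 : ℝ)) ^ 2 :=
          mul_le_mul_of_nonneg_left h4 (Real.exp_pos _).le
  · -- case 1 < β₁
    intro hb
    have hb0 : (0 : ℝ) < β₁ := by linarith
    have hdivlt : 2 / β₁ < 2 := by rw [div_lt_iff₀ hb0]; linarith
    have hdivpos : 0 < 2 / β₁ := by positivity
    have hmem : 1 - 2 / β₁ ∈ Ioo (-1 : ℝ) 1 := ⟨by linarith, by linarith⟩
    have heq : β₁ = 2 / (1 - (1 - 2 / β₁)) := by
      field_simp
      ring
    refine ⟨hmem, ⟨1 - 2 / β₁, ⟨hmem, heq⟩, ?_⟩, heq, ?_⟩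
    · rintro y ⟨⟨hy1, hy2⟩, hy⟩
      have h1y : (0 : ℝ) < 1 - y := by linarith
      have h2 : β₁ * (1 - y) = 2 := by
        rw [hy]; field_simp
      field_simp
      nlinarith
    · intro x hx
      obtain ⟨hx1, hx2⟩ := hx
      have hxs : β₁ * (1 - 2 / β₁) = β₁ - 2 := by field_simp
      set t : ℝ := β₁ * x - β₁ + 2 with ht_def
      have ht2 : t ≤ 2 := by nlinarith
      have key := key_ineq t ht2
      have hexp : Real.exp (β₁ * x) = Real.exp (β₁ * (1 - 2 / β₁)) * Real.exp t := by
        rw [← Real.exp_add, hxs, ht_def]; ring_nf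
      have hsq : (1 - (1 - 2 / β₁)) ^ 2 = 4 / β₁ ^ 2 := by
        field_simp
        norm_num
      have h4 : Real.exp t * (1 - x) ^ 2 ≤ (1 - (1 - 2 / β₁)) ^ 2 := by
        rw [hsq, le_div_iff₀ (by positivity)]
        have hr : Real.exp t * (1 - x) ^ 2 * β₁ ^ 2 = Real.exp t * (2 - t) ^ 2 := by
          rw [ht_def]; ring
        linarith
      calc Real.exp (β₁ * x) * (1 - x) ^ 2
          = Real.exp (β₁ * (1 - 2 / β₁)) * (Real.exp t * (1 - x) ^ 2) := by
            rw [hexp]; ring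
        _ ≤ Real.exp (β₁ * (1 - 2 / β₁)) * (1 - (1 - 2 / β₁)) ^ 2 :=
            mul_le_mul_of_nonneg_left h4 (Real.exp_pos _).le
end

section
/- Let k ≥ 2, x* ∈ (−1,1), q: [−1,1] → (0,∞), let s̃_1,…,s̃_k ∈ ℝ^{k−1} be unit vectors with pairwise inner products −1/(k−1) (vertices of a regular simplex in S^{k−2}), and set s_κ = √(1−x*²)·s̃_κ. Define support points p₀ = (1, 0,…,0)ᵀ and p_κ = (x*, s_κᵀ)ᵀ ∈ S^{k−1} for κ = 1,…,k. Then (1/(k+1))[ q(1) f(p₀)f(p₀)ᵀ + Σ_{κ=1}^{k} q(x*) f(p_κ)f(p_κ)ᵀ ] equals the information matrix of the design putting mass 1/(k+1) at p₀ and mass k/(k+1) uniformly on the orbit {x*} × S^{k−2}(√(1−x*²)); in particular the off-pole part equals (k/(k+1)) q(x*) Q ( ∫_{S^{k−2}} f̃(z) f̃(z)ᵀ dμ(z) ) Qᵀ with Q the block matrix with first column (1, x*, 0,…,0)ᵀ and lower-right block √(1−x*²) I_{k−1}. -/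
open MeasureTheory Matrix Set Filter Topology


lemma ip_full {n : ℕ} (hn : 1 ≤ n) (st : Fin (n+1) → (Fin n → ℝ))
    (hnorm : ∀ i, ∑ t, (st i t) ^ 2 = 1)
    (hip : ∀ i j, i ≠ j → ∑ t, st i t * st j t = -1 / (n:ℝ)) :
    ∀ i j, ∑ t, st i t * st j t = if i = j then 1 else -1 / (n:ℝ) := by
  intro i j
  by_cases h : i = j
  · subst h
    simp only [if_pos rfl]
    rw [← hnorm i]
    exact Finset.sum_congr rfl fun t _ => (sq (st i t)).symm
  · rw [if_neg h]; exact hip i j h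

lemma ite_row_sum {n : ℕ} (hn : 1 ≤ n) (κ : Fin (n+1)) :
    ∑ lam : Fin (n+1), (if κ = lam then (1:ℝ) else -1 / (n:ℝ)) = 0 := by
  have hn' : (n : ℝ) ≠ 0 := Nat.cast_ne_zero.mpr (by omega)
  calc ∑ lam : Fin (n+1), (if κ = lam then (1:ℝ) else -1 / (n:ℝ))
      = ∑ lam : Fin (n+1), ((if κ = lam then (1:ℝ) + 1/(n:ℝ) else 0) + (-1/(n:ℝ))) := by
        refine Finset.sum_congr rfl fun lam _ => ?_
        by_cases h : κ = lam <;> simp [h] <;> ring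
    _ = ((1:ℝ) + 1/(n:ℝ)) + (n+1 : ℕ) • (-1/(n:ℝ)) := by
        rw [Finset.sum_add_distrib, Finset.sum_ite_eq, Finset.sum_const, if_pos (Finset.mem_univ κ),
          Finset.card_univ, Fintype.card_fin]
    _ = 0 := by
        push_cast [nsmul_eq_mul]
        field_simp
        ring

lemma simplex_sum_zero {n : ℕ} (hn : 1 ≤ n) (st : Fin (n+1) → (Fin n → ℝ))
    (hnorm : ∀ i, ∑ t, (st i t) ^ 2 = 1)
    (hip : ∀ i j, i ≠ j → ∑ t, st i t * st j t = -1 / (n:ℝ)) :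
    ∀ t, ∑ κ, st κ t = 0 := by
  have hfull := ip_full hn st hnorm hip
  have key : ∑ t, (∑ κ, st κ t) ^ 2 = 0 := by
    calc ∑ t, (∑ κ, st κ t) ^ 2
        = ∑ t, ∑ κ, ∑ lam, st κ t * st lam t :=
          Finset.sum_congr rfl fun t _ => by rw [sq, Finset.sum_mul_sum]
      _ = ∑ κ, ∑ t, ∑ lam, st κ t * st lam t := Finset.sum_comm
      _ = ∑ κ : Fin (n+1), ∑ lam : Fin (n+1), ∑ t, st κ t * st lam t :=
            Finset.sum_congr rfl fun κ _ => Finset.sum_comm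
      _ = ∑ κ : Fin (n+1), ∑ lam : Fin (n+1), (if κ = lam then 1 else -1/(n:ℝ)) :=
            Finset.sum_congr rfl fun κ _ => Finset.sum_congr rfl fun lam _ => hfull κ lam
      _ = 0 := Finset.sum_eq_zero fun κ _ => ite_row_sum hn κ
  intro t
  have h0 := (Finset.sum_eq_zero_iff_of_nonneg (fun t _ => sq_nonneg _)).mp key t (Finset.mem_univ t)
  exact pow_eq_zero_iff (two_ne_zero) |>.mp h0



lemma sum4_swap {α β γ δ : Type*} [Fintype α] [Fintype β] [Fintype γ] [Fintype δ]
    (f : α → β → γ → δ → ℝ) :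
    ∑ a, ∑ b, ∑ c, ∑ d, f a b c d = ∑ c, ∑ d, ∑ a, ∑ b, f a b c d := by
  calc ∑ a, ∑ b, ∑ c, ∑ d, f a b c d
      = ∑ a, ∑ c, ∑ b, ∑ d, f a b c d :=
        Finset.sum_congr rfl fun a _ => Finset.sum_comm
    _ = ∑ c, ∑ a, ∑ b, ∑ d, f a b c d := Finset.sum_comm
    _ = ∑ c, ∑ a, ∑ d, ∑ b, f a b c d :=
        Finset.sum_congr rfl fun c _ => Finset.sum_congr rfl fun a _ => Finset.sum_comm
    _ = ∑ c, ∑ d, ∑ a, ∑ b, f a b c d :=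
        Finset.sum_congr rfl fun c _ => Finset.sum_comm

lemma ite_sum_univ {m : ℕ} (κ : Fin m) (a b : ℝ) :
    ∑ lam : Fin m, (if κ = lam then a else b) = a + ((m:ℝ) - 1) * b := by
  calc ∑ lam : Fin m, (if κ = lam then a else b)
      = ∑ lam : Fin m, ((if κ = lam then a - b else 0) + b) := by
        refine Finset.sum_congr rfl fun lam _ => ?_
        by_cases h : κ = lam <;> simp [h]
    _ = (a - b) + m • b := by
        rw [Finset.sum_add_distrib, Finset.sum_ite_eq, if_pos (Finset.mem_univ κ),
          Finset.sum_const, Finset.card_univ, Fintype.card_fin]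
    _ = a + ((m:ℝ) - 1) * b := by push_cast [nsmul_eq_mul]; ring

lemma simplex_gram {n : ℕ} (hn : 1 ≤ n) (st : Fin (n+1) → (Fin n → ℝ))
    (hnorm : ∀ i, ∑ t, (st i t) ^ 2 = 1)
    (hip : ∀ i j, i ≠ j → ∑ t, st i t * st j t = -1 / (n:ℝ)) :
    ∀ t u, ∑ κ, st κ t * st κ u = if t = u then ((n:ℝ)+1)/(n:ℝ) else 0 := by
  have hn' : (n : ℝ) ≠ 0 := Nat.cast_ne_zero.mpr (by omega)
  have hfull := ip_full hn st hnorm hip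
  set c : ℝ := ((n:ℝ)+1)/(n:ℝ) with hc
  set G : Fin n → Fin n → ℝ := fun t u => ∑ κ, st κ t * st κ u with hG
  have htr : ∑ t, G t t = (n:ℝ) + 1 := by
    calc ∑ t, G t t = ∑ κ : Fin (n+1), ∑ t, st κ t * st κ t := Finset.sum_comm
      _ = ∑ κ : Fin (n+1), (1:ℝ) :=
          Finset.sum_congr rfl fun κ _ => by simpa using hfull κ κ
      _ = (n:ℝ) + 1 := by simp
  have hGsq : ∑ t, ∑ u, (G t u)^2 = ((n:ℝ)+1)^2/(n:ℝ) := by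
    calc ∑ t, ∑ u, (G t u)^2
        = ∑ t, ∑ u, ∑ κ, ∑ lam, (st κ t * st lam t) * (st κ u * st lam u) := by
          refine Finset.sum_congr rfl fun t _ => Finset.sum_congr rfl fun u _ => ?_
          rw [sq, Finset.sum_mul_sum]
          exact Finset.sum_congr rfl fun κ _ => Finset.sum_congr rfl fun lam _ => by ring
      _ = ∑ κ, ∑ lam, ∑ t, ∑ u, (st κ t * st lam t) * (st κ u * st lam u) := sum4_swap _
      _ = ∑ κ : Fin (n+1), ∑ lam : Fin (n+1), (∑ t, st κ t * st lam t) * (∑ u, st κ u * st lam u) := by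
          refine Finset.sum_congr rfl fun κ _ => Finset.sum_congr rfl fun lam _ => ?_
          rw [Finset.sum_mul_sum]
      _ = ∑ κ : Fin (n+1), ∑ lam : Fin (n+1), (if κ = lam then (1:ℝ) else 1/(n:ℝ)^2) := by
          refine Finset.sum_congr rfl fun κ _ => Finset.sum_congr rfl fun lam _ => ?_
          rw [hfull κ lam]
          by_cases h : κ = lam <;> simp [h] <;> field_simp <;> ring
      _ = ∑ κ : Fin (n+1), ((1:ℝ) + (((n:ℕ)+1:ℝ) - 1) * (1/(n:ℝ)^2)) := by
          refine Finset.sum_congr rfl fun κ _ => ?_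
          have := ite_sum_univ κ (1:ℝ) (1/(n:ℝ)^2)
          rw [this]; push_cast; ring_nf
      _ = ((n:ℝ)+1)^2/(n:ℝ) := by
          rw [Finset.sum_const, Finset.card_univ, Fintype.card_fin]
          push_cast [nsmul_eq_mul]
          field_simp
          ring
  have inner1 : ∀ t : Fin n, ∑ u, (if t = u then c^2 else (0:ℝ)) = c^2 := fun t => by
    rw [Finset.sum_ite_eq]; exact if_pos (Finset.mem_univ t)
  have inner2 : ∀ t : Fin n, ∑ u, (if t = u then (-2)*c*G t u else (0:ℝ)) = (-2)*c*G t t := fun t => by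
    rw [Finset.sum_ite_eq]; exact if_pos (Finset.mem_univ t)
  have key : ∑ t, ∑ u, ((if t = u then c else 0) - G t u)^2 = 0 := by
    have expand : ∀ t u : Fin n, ((if t = u then c else 0) - G t u)^2
        = ((if t = u then c^2 else 0) + (if t = u then (-2)*c*G t u else 0)) + (G t u)^2 := by
      intro t u; by_cases h : t = u <;> simp [h] <;> ring
    calc ∑ t, ∑ u, ((if t = u then c else 0) - G t u)^2
        = ∑ t, ∑ u, (((if t = u then c^2 else 0) + (if t = u then (-2)*c*G t u else 0)) + (G t u)^2) :=
          Finset.sum_congr rfl fun t _ => Finset.sum_congr rfl fun u _ => expand t u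
      _ = ((∑ t : Fin n, ∑ u : Fin n, (if t = u then c^2 else (0:ℝ)))
            + (∑ t : Fin n, ∑ u : Fin n, (if t = u then (-2)*c*G t u else (0:ℝ)))) + ∑ t, ∑ u, (G t u)^2 := by
          simp only [Finset.sum_add_distrib]
      _ = (((n:ℕ) • c^2) + ((-2)*c*((n:ℝ)+1))) + ((n:ℝ)+1)^2/(n:ℝ) := by
          rw [hGsq]
          congr 1
          congr 1
          · rw [Finset.sum_congr rfl fun t _ => inner1 t, Finset.sum_const, Finset.card_univ,
              Fintype.card_fin]
          · rw [Finset.sum_congr rfl fun t _ => inner2 t]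
            calc ∑ t, (-2)*c*G t t = (-2)*c*∑ t, G t t := by rw [Finset.mul_sum]
              _ = (-2)*c*((n:ℝ)+1) := by rw [htr]
      _ = 0 := by
          rw [hc, nsmul_eq_mul]
          field_simp
          ring
  intro t u
  have h1 := (Finset.sum_eq_zero_iff_of_nonneg
    (fun t _ => Finset.sum_nonneg fun u _ => sq_nonneg _)).mp key t (Finset.mem_univ t)
  have h2 := (Finset.sum_eq_zero_iff_of_nonneg (fun u _ => sq_nonneg _)).mp h1 u (Finset.mem_univ u)
  have h3 := pow_eq_zero_iff (two_ne_zero) |>.mp h2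
  have h4 : G t u = if t = u then c else 0 := by linarith
  simpa [hG, hc] using h4

section Moments
variable {n : ℕ} (μ : Measure (Fin n → ℝ)) [IsProbabilityMeasure μ]

lemma inv_transfer (hinv : ∀ O : Matrix (Fin n) (Fin n) ℝ, O * Oᵀ = 1 →
      μ.map (fun z => O.mulVec z) = μ)
    (O : Matrix (Fin n) (Fin n) ℝ) (hO : O * Oᵀ = 1)
    (g : (Fin n → ℝ) → ℝ) (hg : Continuous g) :
    ∫ z, g z ∂μ = ∫ z, g (O.mulVec z) ∂μ := by
  have hcont : Continuous fun z : Fin n → ℝ => O.mulVec z := by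
    have := LinearMap.continuous_of_finiteDimensional (O.mulVecLin)
    exact this
  conv_lhs => rw [← hinv O hO]
  rw [integral_map hcont.measurable.aemeasurable hg.aestronglyMeasurable]

lemma first_moment (hinv : ∀ O : Matrix (Fin n) (Fin n) ℝ, O * Oᵀ = 1 →
      μ.map (fun z => O.mulVec z) = μ) (i : Fin n) :
    ∫ z, z i ∂μ = 0 := by
  have h1 : ((-1 : Matrix (Fin n) (Fin n) ℝ)) * (-1 : Matrix (Fin n) (Fin n) ℝ)ᵀ = 1 := by
    simp
  have := inv_transfer μ hinv (-1) h1 (fun z => z i) (continuous_apply i)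
  have h2 : ∀ z : Fin n → ℝ, ((-1 : Matrix (Fin n) (Fin n) ℝ).mulVec z) i = -(z i) := by
    intro z
    rw [Matrix.neg_mulVec, Matrix.one_mulVec]
    rfl
  rw [show (fun z : Fin n → ℝ => ((-1 : Matrix (Fin n) (Fin n) ℝ).mulVec z) i) = fun z => -(z i)
    from funext h2] at this
  rw [integral_neg] at this
  linarith

lemma second_moment_offdiag (hinv : ∀ O : Matrix (Fin n) (Fin n) ℝ, O * Oᵀ = 1 →
      μ.map (fun z => O.mulVec z) = μ) (i j : Fin n) (hij : i ≠ j) :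
    ∫ z, z i * z j ∂μ = 0 := by
  set O : Matrix (Fin n) (Fin n) ℝ := Matrix.diagonal (fun t => if t = i then -1 else 1) with hOdef
  have hO : O * Oᵀ = 1 := by
    rw [hOdef, Matrix.diagonal_transpose, Matrix.diagonal_mul_diagonal]
    have h1 : (fun t => (if t = i then (-1:ℝ) else 1) * (if t = i then -1 else 1)) = fun _ => 1 := by
      funext t; by_cases h : t = i <;> simp [h]
    rw [h1, Matrix.diagonal_one]
  have hg : Continuous fun z : Fin n → ℝ => z i * z j :=
    (continuous_apply i).mul (continuous_apply j)
  have key := inv_transfer μ hinv O hO _ hg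
  have h2 : ∀ z : Fin n → ℝ, (O.mulVec z) i * (O.mulVec z) j = -(z i * z j) := by
    intro z
    rw [hOdef, Matrix.mulVec_diagonal, Matrix.mulVec_diagonal]
    simp [hij, Ne.symm hij]
  rw [show (fun z : Fin n → ℝ => (O.mulVec z) i * (O.mulVec z) j) = fun z => -(z i * z j)
    from funext h2, integral_neg] at key
  linarith

lemma second_moment_swap (hinv : ∀ O : Matrix (Fin n) (Fin n) ℝ, O * Oᵀ = 1 →
      μ.map (fun z => O.mulVec z) = μ) (i j : Fin n) :
    ∫ z, (z i)^2 ∂μ = ∫ z, (z j)^2 ∂μ := by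
  set σ := Equiv.swap i j with hσ
  set O : Matrix (Fin n) (Fin n) ℝ := Matrix.of (fun a b => if σ a = b then 1 else 0) with hOdef
  have hmul : ∀ z : Fin n → ℝ, ∀ a, O.mulVec z a = z (σ a) := by
    intro z a
    simp only [hOdef, Matrix.mulVec, dotProduct, Matrix.of_apply, ite_mul, one_mul,
      zero_mul]
    rw [Finset.sum_ite_eq]
    exact if_pos (Finset.mem_univ _)
  have hO : O * Oᵀ = 1 := by
    ext a b
    rw [Matrix.mul_apply]
    simp only [hOdef, Matrix.transpose_apply, Matrix.of_apply, ite_mul, one_mul, zero_mul]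
    rw [Finset.sum_ite_eq, if_pos (Finset.mem_univ _)]
    by_cases h : a = b
    · subst h; simp [Matrix.one_apply]
    · simp [Matrix.one_apply, h, fun h2 : σ b = σ a => h (σ.injective h2).symm]
      exact fun h2 => h h2.symm
  have hg : Continuous fun z : Fin n → ℝ => (z i)^2 := (continuous_apply i).pow 2
  have key := inv_transfer μ hinv O hO _ hg
  rw [show (fun z : Fin n → ℝ => ((O.mulVec z) i)^2) = fun z => (z (σ i))^2 from
    funext fun z => by rw [hmul z i]] at key
  rw [hσ, Equiv.swap_apply_left] at key
  exact key

lemma ae_sphere (hsupp : μ {z | ∑ i, (z i) ^ 2 = 1} = 1) :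
    ∀ᵐ z ∂μ, ∑ i, (z i) ^ 2 = 1 := by
  have hc : Continuous fun z : Fin n → ℝ => ∑ i, (z i) ^ 2 :=
    continuous_finset_sum _ fun i _ => (continuous_apply i).pow 2
  have hS : MeasurableSet {z : Fin n → ℝ | ∑ i, (z i) ^ 2 = 1} :=
    hc.measurable (measurableSet_singleton 1)
  have hcompl := measure_compl hS (measure_ne_top μ _)
  rw [hsupp, measure_univ, tsub_self] at hcompl
  rw [ae_iff, ← Set.compl_setOf]
  exact hcompl

lemma sq_integrable (hsupp : μ {z | ∑ i, (z i) ^ 2 = 1} = 1) (i : Fin n) :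
    Integrable (fun z => (z i) ^ 2) μ := by
  refine Integrable.mono' (integrable_const (1:ℝ))
    ((continuous_apply i).pow 2).aestronglyMeasurable ?_
  filter_upwards [ae_sphere μ hsupp] with z hz
  rw [Real.norm_eq_abs, abs_of_nonneg (sq_nonneg _)]
  calc (z i)^2 ≤ ∑ t, (z t)^2 :=
    Finset.single_le_sum (fun t _ => sq_nonneg (z t)) (Finset.mem_univ i)
  _ = 1 := hz

lemma second_moment_diag (hn : 1 ≤ n)
    (hsupp : μ {z | ∑ i, (z i) ^ 2 = 1} = 1)
    (hinv : ∀ O : Matrix (Fin n) (Fin n) ℝ, O * Oᵀ = 1 →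
      μ.map (fun z => O.mulVec z) = μ) (i : Fin n) :
    ∫ z, (z i) ^ 2 ∂μ = 1 / (n : ℝ) := by
  have hn' : (n : ℝ) ≠ 0 := Nat.cast_ne_zero.mpr (by omega)
  have htot : ∑ j, ∫ z, (z j) ^ 2 ∂μ = 1 := by
    rw [← integral_finset_sum _ fun j _ => sq_integrable μ hsupp j]
    rw [integral_congr_ae (g := fun _ => (1:ℝ)) ((ae_sphere μ hsupp).mono fun z hz => hz)]
    simp
  have hall : ∀ j, ∫ z, (z j) ^ 2 ∂μ = ∫ z, (z i) ^ 2 ∂μ :=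
    fun j => second_moment_swap μ hinv j i
  rw [Finset.sum_congr rfl fun j _ => hall j, Finset.sum_const, Finset.card_univ,
    Fintype.card_fin, nsmul_eq_mul] at htot
  field_simp
  linarith [htot]

end Moments


/-- Discretization of the invariant design on the ball `B_k` with `k = n+1 ≥ 2`:
the `k+1`-point design with pole `p₀ = (1,0,…,0)` and the `k` scaled simplex
points `p_κ = (x*, √(1-x*²) s̃_κ)` has the same information matrix as the
generalized design putting mass `1/(k+1)` at the pole and mass `k/(k+1)`
uniformly on the orbit `{x*} × S^{k-2}(√(1-x*²))`, the orbit part being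
`Q (∫ f̃ f̃ᵀ dμ) Qᵀ` with `μ` the uniform measure on `S^{k-2}`. -/
theorem stmt17 (n : ℕ) (hn : 1 ≤ n) (xs : ℝ) (hxs : xs ∈ Ioo (-1 : ℝ) 1)
    (q : ℝ → ℝ) (hq : ∀ x, 0 < q x)
    (st : Fin (n+1) → (Fin n → ℝ))
    (hnorm : ∀ i, ∑ t, (st i t) ^ 2 = 1)
    (hip : ∀ i j, i ≠ j → ∑ t, st i t * st j t = -1 / n)
    (μ : Measure (Fin n → ℝ)) [IsProbabilityMeasure μ]
    (hsupp : μ {z | ∑ i, (z i) ^ 2 = 1} = 1)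
    (hinv : ∀ O : Matrix (Fin n) (Fin n) ℝ, O * Oᵀ = 1 →
      μ.map (fun z => O.mulVec z) = μ) :
    (1 / (n + 2 : ℝ)) •
        (q 1 • (Matrix.of fun a b : Fin (n+2) =>
            (Fin.cons 1 (fun i : Fin (n+1) => if i = 0 then (1:ℝ) else 0) : Fin (n+2) → ℝ) a *
            (Fin.cons 1 (fun i : Fin (n+1) => if i = 0 then (1:ℝ) else 0) : Fin (n+2) → ℝ) b) +
          ∑ κ : Fin (n+1), q xs • (Matrix.of fun a b : Fin (n+2) =>
            (Fin.cons 1 (Fin.cons xs (fun t => Real.sqrt (1 - xs ^ 2) * st κ t)) : Fin (n+2) → ℝ) a *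
            (Fin.cons 1 (Fin.cons xs (fun t => Real.sqrt (1 - xs ^ 2) * st κ t)) : Fin (n+2) → ℝ) b))
      = (1 / (n + 2 : ℝ)) • q 1 • (Matrix.of fun a b : Fin (n+2) =>
            (Fin.cons 1 (fun i : Fin (n+1) => if i = 0 then (1:ℝ) else 0) : Fin (n+2) → ℝ) a *
            (Fin.cons 1 (fun i : Fin (n+1) => if i = 0 then (1:ℝ) else 0) : Fin (n+2) → ℝ) b) +
        ((n + 1 : ℝ) / (n + 2 : ℝ)) • q xs •
          ((Matrix.of fun (a : Fin (n+2)) (b : Fin (n+1)) =>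
              if (b : ℕ) = 0 then
                (if (a : ℕ) = 0 then (1:ℝ) else if (a : ℕ) = 1 then xs else 0)
              else (if (a : ℕ) = (b : ℕ) + 1 then Real.sqrt (1 - xs ^ 2) else 0)) *
            (Matrix.of fun a b : Fin (n+1) =>
              ∫ z, (Fin.cons 1 z : Fin (n+1) → ℝ) a * (Fin.cons 1 z : Fin (n+1) → ℝ) b ∂μ) *
            (Matrix.of fun (a : Fin (n+2)) (b : Fin (n+1)) =>
              if (b : ℕ) = 0 then
                (if (a : ℕ) = 0 then (1:ℝ) else if (a : ℕ) = 1 then xs else 0)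
              else (if (a : ℕ) = (b : ℕ) + 1 then Real.sqrt (1 - xs ^ 2) else 0))ᵀ) := by
  have hn' : (n : ℝ) ≠ 0 := Nat.cast_ne_zero.mpr (by omega)
  have hn2 : (n : ℝ) + 2 ≠ 0 := by positivity
  have h1x : (0:ℝ) ≤ 1 - xs ^ 2 := by nlinarith [hxs.1, hxs.2]
  have hrt : Real.sqrt (1 - xs ^ 2) * Real.sqrt (1 - xs ^ 2) = 1 - xs ^ 2 :=
    Real.mul_self_sqrt h1x
  have hsum0 := simplex_sum_zero hn st hnorm hip
  have hgram := simplex_gram hn st hnorm hip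
  have hsum0' : ∀ (c : ℝ) (u : Fin n), c * st 0 u + ∑ x : Fin n, c * st x.succ u = 0 := by
    intro c u
    have h := hsum0 u
    rw [Fin.sum_univ_succ] at h
    calc c * st 0 u + ∑ x : Fin n, c * st x.succ u
        = c * (st 0 u + ∑ x : Fin n, st x.succ u) := by rw [mul_add, Finset.mul_sum]
      _ = 0 := by rw [h, mul_zero]
  -- the moment matrix is diagonal
  have hM : (Matrix.of fun a b : Fin (n+1) =>
        ∫ z, (Fin.cons 1 z : Fin (n+1) → ℝ) a * (Fin.cons 1 z : Fin (n+1) → ℝ) b ∂μ)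
      = Matrix.diagonal (Fin.cons 1 fun _ => 1/(n:ℝ)) := by
    ext a b
    rw [Matrix.of_apply, Matrix.diagonal_apply]
    induction a using Fin.cases with
    | zero => induction b using Fin.cases with
      | zero => simp
      | succ b1 =>
          simp only [Fin.cons_zero, Fin.cons_succ, one_mul]
          rw [first_moment μ hinv b1]
          simp [(Fin.succ_ne_zero b1).symm]
    | succ a1 => induction b using Fin.cases with
      | zero =>
          simp only [Fin.cons_zero, Fin.cons_succ, mul_one]
          rw [first_moment μ hinv a1]
          simp [Fin.succ_ne_zero a1]
      | succ b1 =>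
          simp only [Fin.cons_succ]
          by_cases h : a1 = b1
          · subst h
            simp only [if_pos rfl, Fin.cons_succ]
            rw [show (fun z : Fin n → ℝ => z a1 * z a1) = fun z => (z a1)^2 from
              funext fun z => (sq (z a1)).symm]
            exact second_moment_diag μ hn hsupp hinv a1
          · rw [if_neg (by simpa [Fin.succ_inj] using h)]
            exact second_moment_offdiag μ hinv a1 b1 h
  rw [smul_add, hM]
  congr 1
  have hQDQ : ∀ (A : Matrix (Fin (n+2)) (Fin (n+1)) ℝ) (d : Fin (n+1) → ℝ) (a b : Fin (n+2)),
      (A * Matrix.diagonal d * Aᵀ) a b = ∑ j, A a j * d j * A b j := by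
    intro A d a b
    rw [Matrix.mul_apply]
    exact Finset.sum_congr rfl fun j _ => by rw [Matrix.mul_diagonal, Matrix.transpose_apply]
  ext a b
  simp only [Matrix.smul_apply, Matrix.sum_apply, smul_eq_mul, Matrix.of_apply, hQDQ]
  induction a using Fin.cases with
  | zero => induction b using Fin.cases with
    | zero => (simp [Fin.sum_univ_succ, Fin.val_succ, hrt, Finset.sum_const, Finset.card_univ, hsum0']; (try field_simp); (try ring); (try (right; exact hsum0' _ _)))
    | succ b1 => induction b1 using Fin.cases with
      | zero => (simp [Fin.sum_univ_succ, Fin.val_succ, hrt, Finset.sum_const, Finset.card_univ, hsum0']; (try field_simp); (try ring); (try (right; exact hsum0' _ _)))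
      | succ u => (simp [Fin.sum_univ_succ, Fin.val_succ, hrt, Finset.sum_const, Finset.card_univ, hsum0']; (try field_simp); (try ring); (try (right; exact hsum0' _ _)))
  | succ a1 => induction a1 using Fin.cases with
    | zero => induction b using Fin.cases with
      | zero => (simp [Fin.sum_univ_succ, Fin.val_succ, hrt, Finset.sum_const, Finset.card_univ, hsum0']; (try field_simp); (try ring); (try (right; exact hsum0' _ _)))
      | succ b1 => induction b1 using Fin.cases with
        | zero => (simp [Fin.sum_univ_succ, Fin.val_succ, hrt, Finset.sum_const, Finset.card_univ, hsum0']; (try field_simp); (try ring); (try (right; exact hsum0' _ _)))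
        | succ u => (simp [Fin.sum_univ_succ, Fin.val_succ, hrt, Finset.sum_const, Finset.card_univ, hsum0']; (try field_simp); (try ring); (try (right; exact hsum0' _ _)))
    | succ t => induction b using Fin.cases with
      | zero => (simp [Fin.sum_univ_succ, Fin.val_succ, hrt, Finset.sum_const, Finset.card_univ, hsum0']; (try field_simp); (try ring); (try (right; exact hsum0' _ _)))
      | succ b1 => induction b1 using Fin.cases with
        | zero => (simp [Fin.sum_univ_succ, Fin.val_succ, hrt, Finset.sum_const, Finset.card_univ, hsum0']; (try field_simp); (try ring); (try (right; exact hsum0' _ _)))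
        | succ u =>
          simp only [Fin.cons_succ]
          have hL : ∑ κ : Fin (n+1), q xs * (Real.sqrt (1-xs^2) * st κ t * (Real.sqrt (1-xs^2) * st κ u))
              = q xs * (1-xs^2) * (if t = u then ((n:ℝ)+1)/(n:ℝ) else 0) := by
            rw [← hgram t u, Finset.mul_sum]
            refine Finset.sum_congr rfl fun κ _ => ?_
            calc q xs * (Real.sqrt (1-xs^2) * st κ t * (Real.sqrt (1-xs^2) * st κ u))
                = q xs * (Real.sqrt (1-xs^2) * Real.sqrt (1-xs^2)) * (st κ t * st κ u) := by ring
              _ = q xs * (1-xs^2) * (st κ t * st κ u) := by rw [hrt]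
          rw [hL]
          simp only [Fin.sum_univ_succ, Fin.val_succ, Fin.val_zero, Fin.cons_zero, Fin.cons_succ]
          norm_num
          simp only [Fin.val_inj, Finset.sum_ite_eq, Finset.mem_univ, if_true]
          by_cases htu : t = u
          · subst htu; simp; field_simp; ring_nf; rw [Real.sq_sqrt h1x]; ring
          · simp [htu, fun h : (u:ℕ) = (t:ℕ) => htu (Fin.val_injective h).symm]
end

section
/- Let β₁ > 0, a > 0, β₀ ∈ ℝ, k ≥ 2, and x* ∈ (−1,1) with x* ≠ 0. If β₁/(1 + a exp(β₀ + β₁ x*)) = 2(1 + k x*)/(k(1 − x*²)), then β₁ = −(1/x*)·W( −(2 a x* (1 + k x*))/(k(1 − x*²)) · exp(β₀ + 2 x* (1 + k x*)/(k(1 − x*²))) ) + 2(1 + k x*)/(k(1 − x*²)), where W is a branch of the Lambert W function (i.e., W(y)e^{W(y)} = y). -/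
open MeasureTheory Set Filter Topology

/-- Inversion of the negative-binomial optimality equation via the Lambert W
function: if `x*` solves the optimality equation, then for the appropriate
branch value `w` (i.e. some `w` with `w e^w = y` for the stated argument `y`)
one has `β₁ = -(1/x*) w + 2(1+kx*)/(k(1-x*²))`. -/
theorem stmt19 (k : ℕ) (hk : 2 ≤ k) (a β₀ β₁ xs : ℝ) (ha : 0 < a) (hβ : 0 < β₁)
    (hx : xs ∈ Ioo (-1 : ℝ) 1) (hx0 : xs ≠ 0)
    (heq : β₁ / (1 + a * Real.exp (β₀ + β₁ * xs))
      = 2 * (1 + k * xs) / (k * (1 - xs ^ 2))) :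
    ∃ w : ℝ,
      w * Real.exp w
        = -(2 * a * xs * (1 + k * xs)) / (k * (1 - xs ^ 2)) *
            Real.exp (β₀ + 2 * xs * (1 + k * xs) / (k * (1 - xs ^ 2))) ∧
      β₁ = -(1 / xs) * w + 2 * (1 + k * xs) / (k * (1 - xs ^ 2)) := by
  set c : ℝ := 2 * (1 + k * xs) / (k * (1 - xs ^ 2)) with hc
  clear_value c
  have hD : (0 : ℝ) < 1 + a * Real.exp (β₀ + β₁ * xs) := by positivity
  have hβ₁ : β₁ = c * (1 + a * Real.exp (β₀ + β₁ * xs)) := by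
    rw [div_eq_iff hD.ne'] at heq; exact heq
  have hwc : β₁ - c = c * a * Real.exp (β₀ + β₁ * xs) := by
    linear_combination hβ₁
  refine ⟨-xs * (β₁ - c), ?_, ?_⟩
  · have h1 : -(2 * a * xs * (1 + (k : ℝ) * xs)) / (k * (1 - xs ^ 2)) = -a * xs * c := by
      rw [hc]; ring
    have h2 : β₀ + 2 * xs * (1 + (k : ℝ) * xs) / (k * (1 - xs ^ 2))
        = (β₀ + β₁ * xs) + -xs * (β₁ - c) := by
      rw [hc]; field_simp; ring
    rw [h1, h2, Real.exp_add, hwc]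
    ring
  · have : -(1 / xs) * (-xs * (β₁ - c)) + c = β₁ := by
      field_simp
      ring
    linarith [this]
end
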